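/- Let d ≥ 1 and let Λ ⊆ ℤ^d be finite. Then the partition functions of the membrane model satisfy the FKG lattice condition: for all subsets A, A' ⊆ Λ, Z_{Λ∖(A∪A')} · Z_{Λ∖(A∩A')} ≥ Z_{Λ∖A} · Z_{Λ∖A'}. -/

import Mathlib

open MeasureTheory Finset Filter
open scoped Pointwise

noncomputable section

/-- The lattice `ℤ^d`. -/
abbrev Zd (d : ℕ) : Type := Fin d → ℤ

/-- The `i`-th standard unit vector of `ℤ^d`. -/
def unitv (d : ℕ) (i : Fin d) : Zd d := fun j => if j = i then 1 else 0

/-- The discrete Laplacian. -/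
def discLap (d : ℕ) (v : Zd d → ℝ) (x : Zd d) : ℝ :=
  ∑ i : Fin d, (v (x + unitv d i) - 2 * v x + v (x - unitv d i))

/-- The discrete Bilaplacian. -/
def bilap (d : ℕ) (v : Zd d → ℝ) : Zd d → ℝ :=
  fun x => discLap d (fun y => discLap d v y) x

/-- Extension of `ψ : V → ℝ` by zero to all of `ℤ^d`. -/
def extZero (d : ℕ) (V : Finset (Zd d)) (ψ : ↥V → ℝ) : Zd d → ℝ :=
  fun x => if h : x ∈ V then ψ ⟨x, h⟩ else 0

/-- The membrane Hamiltonian `H_V(ψ) = (1/2)·Σ_x (Δ₁ψ̃(x))²`. -/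
def hamiltonian (d : ℕ) (V : Finset (Zd d)) (ψ : ↥V → ℝ) : ℝ :=
  (1/2) * ∑ᶠ x : Zd d, (discLap d (extZero d V ψ) x)^2

/-- The partition function `Z_V`. -/
def Zpart (d : ℕ) (V : Finset (Zd d)) : ℝ :=
  ∫ ψ : ↥V → ℝ, Real.exp (-(hamiltonian d V ψ))

/-- The pinned partition function `Z^ε_Λ`. -/
def Zeps (d : ℕ) (ε : ℝ) (Λ : Finset (Zd d)) : ℝ :=
  ∑ A ∈ Λ.powerset, ε ^ A.card * Zpart d (Λ \ A)

/-- The pinned-set measure `ζ^ε_Λ({A})`. -/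
def zeta (d : ℕ) (ε : ℝ) (Λ A : Finset (Zd d)) : ℝ :=
  ε ^ A.card * Zpart d (Λ \ A) / Zeps d ε Λ

/-- `g` is a Green's function of `V` at `y` for the discrete Bilaplacian. -/
def IsGreen (d : ℕ) (V : Finset (Zd d)) (y : Zd d) (g : Zd d → ℝ) : Prop :=
  (∀ x : Zd d, x ∉ V → g x = 0) ∧ bilap d g y = 1 ∧ ∀ x ∈ V, x ≠ y → bilap d g x = 0

/-- Entry `(i,j)` of the discrete Hessian `D¹_i D¹_{−j} u (x)`. -/
def hess (d : ℕ) (u : Zd d → ℝ) (i j : Fin d) (x : Zd d) : ℝ :=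
  u (x + unitv d i) - u (x + unitv d i - unitv d j) - u x + u (x - unitv d j)

/-- `|∇₁²u(x)|²`, the sum of squares of the entries of the discrete Hessian. -/
def hessSq (d : ℕ) (u : Zd d → ℝ) (x : Zd d) : ℝ :=
  ∑ i : Fin d, ∑ j : Fin d, (hess d u i j x)^2

/-- `|∇₁u(x)|²`, the sum of squares of the entries of the discrete gradient. -/
def gradSq (d : ℕ) (u : Zd d → ℝ) (x : Zd d) : ℝ :=
  ∑ i : Fin d, (u (x + unitv d i) - u x)^2

/-- The Euclidean norm of a point of `ℤ^d`. -/
def zNorm (d : ℕ) (x : Zd d) : ℝ := Real.sqrt (∑ i : Fin d, ((x i : ℝ))^2)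

/-- The discrete cube `Q_r(x) = (x + [−r,r]^d) ∩ ℤ^d` (integer radius `r`). -/
def cube (d : ℕ) (r : ℤ) (x : Zd d) : Finset (Zd d) :=
  Finset.Icc (fun i => x i - r) (fun i => x i + r)

namespace FKGaux
open Matrix

variable (d : ℕ)

/-- indicator of `y`. -/
def ee (y : Zd d) : Zd d → ℝ := fun z => if z = y then 1 else 0

/-- column of the Laplacian operator. -/
def Lp (y z : Zd d) : ℝ := discLap d (ee d y) z

/-- points where `Lp y ·` can be nonzero. -/
def nbhd (y : Zd d) : Finset (Zd d) :=
  insert y ((Finset.univ.image fun i => y + unitv d i) ∪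
    (Finset.univ.image fun i => y - unitv d i))

lemma Lp_eq_zero {y z : Zd d} (h : z ∉ nbhd d y) : Lp d y z = 0 := by
  simp only [nbhd, Finset.mem_insert, Finset.mem_union, Finset.mem_image, Finset.mem_univ,
    true_and, not_or, not_exists] at h
  obtain ⟨h0, h1, h2⟩ := h
  unfold Lp discLap ee
  refine Finset.sum_eq_zero fun i _ => ?_
  have e1 : ¬(z + unitv d i = y) := fun hc => h2 i (by rw [← hc]; abel)
  have e2 : ¬(z = y) := fun hc => h0 hc
  have e3 : ¬(z - unitv d i = y) := fun hc => h1 i (by rw [← hc]; abel)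
  rw [if_neg e1, if_neg e2, if_neg e3]
  ring

/-- The Gram "matrix" globally. -/
def Qm (x y : Zd d) : ℝ := ∑ᶠ z, Lp d x z * Lp d y z

lemma Qm_symm (x y : Zd d) : Qm d x y = Qm d y x := by
  unfold Qm; exact finsum_congr fun z => mul_comm _ _

lemma Qm_eq_sum {T : Finset (Zd d)} {x : Zd d} (hx : nbhd d x ⊆ T) (y : Zd d) :
    Qm d x y = ∑ z ∈ T, Lp d x z * Lp d y z := by
  refine finsum_eq_sum_of_support_subset _ ?_
  intro z hz
  simp only [Function.mem_support] at hz
  by_contra hzT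
  exact hz (by rw [Lp_eq_zero d (fun hmem => hzT (hx hmem)), zero_mul])

def SV (V : Finset (Zd d)) : Finset (Zd d) := V.biUnion (nbhd d)

lemma nbhd_subset_SV {V : Finset (Zd d)} {v : Zd d} (hv : v ∈ V) : nbhd d v ⊆ SV d V :=
  fun z hz => Finset.mem_biUnion.2 ⟨v, hv, hz⟩

/-- The Gram matrix of `V`. -/
def MV (V : Finset (Zd d)) : Matrix ↥V ↥V ℝ := Matrix.of fun a b => Qm d ↑a ↑b

lemma extZero_apply_eq_sum (V : Finset (Zd d)) (ψ : ↥V → ℝ) (x : Zd d) :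
    extZero d V ψ x = ∑ v ∈ V.attach, ψ v * ee d ↑v x := by
  unfold extZero ee
  by_cases h : x ∈ V
  · rw [dif_pos h, Finset.sum_eq_single (⟨x, h⟩ : ↥V)]
    · simp
    · rintro ⟨b, hb⟩ - hne
      have hxb : ¬(x = b) := fun hc => hne (Subtype.ext hc.symm)
      simp [if_neg hxb]
    · intro hx; exact absurd (Finset.mem_attach _ _) hx
  · rw [dif_neg h]
    refine (Finset.sum_eq_zero fun v _ => ?_).symm
    have hxv : ¬(x = ↑v) := fun hc => h (hc ▸ v.2)
    simp [if_neg hxv]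

lemma discLap_ext (V : Finset (Zd d)) (ψ : ↥V → ℝ) (z : Zd d) :
    discLap d (extZero d V ψ) z = ∑ v ∈ V.attach, ψ v * Lp d ↑v z := by
  simp only [Lp, discLap]
  calc ∑ i : Fin d, (extZero d V ψ (z + unitv d i) - 2 * extZero d V ψ z
        + extZero d V ψ (z - unitv d i))
      = ∑ i : Fin d, ∑ v ∈ V.attach, (ψ v * ee d ↑v (z + unitv d i)
          - 2 * (ψ v * ee d ↑v z) + ψ v * ee d ↑v (z - unitv d i)) := by
        refine Finset.sum_congr rfl fun i _ => ?_
        rw [extZero_apply_eq_sum, extZero_apply_eq_sum, extZero_apply_eq_sum, Finset.mul_sum,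
          ← Finset.sum_sub_distrib, ← Finset.sum_add_distrib]
    _ = ∑ v ∈ V.attach, ψ v * ∑ i : Fin d, (ee d ↑v (z + unitv d i) - 2 * ee d ↑v z
          + ee d ↑v (z - unitv d i)) := by
        rw [Finset.sum_comm]
        refine Finset.sum_congr rfl fun v _ => ?_
        rw [Finset.mul_sum]
        exact Finset.sum_congr rfl fun i _ => by ring

lemma discLap_ext_eq_zero (V : Finset (Zd d)) (ψ : ↥V → ℝ) {z : Zd d} (hz : z ∉ SV d V) :
    discLap d (extZero d V ψ) z = 0 := by
  rw [discLap_ext]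
  refine Finset.sum_eq_zero fun v _ => ?_
  rw [Lp_eq_zero d (fun hmem => hz (nbhd_subset_SV d v.2 hmem)), mul_zero]

lemma hamiltonian_eq_finset (V : Finset (Zd d)) (ψ : ↥V → ℝ) :
    hamiltonian d V ψ = (1/2) * ∑ z ∈ SV d V, (discLap d (extZero d V ψ) z)^2 := by
  unfold hamiltonian
  congr 1
  refine finsum_eq_sum_of_support_subset _ fun z hz => ?_
  simp only [Function.mem_support] at hz
  by_contra hzT
  exact hz (by rw [discLap_ext_eq_zero d V ψ hzT]; norm_num)

lemma hamiltonian_quad (V : Finset (Zd d)) (ψ : ↥V → ℝ) :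
    hamiltonian d V ψ = (1/2) * (ψ ⬝ᵥ ((MV d V) *ᵥ ψ)) := by
  rw [hamiltonian_eq_finset]
  congr 1
  calc ∑ z ∈ SV d V, (discLap d (extZero d V ψ) z)^2
      = ∑ z ∈ SV d V, ∑ a ∈ V.attach, ∑ b ∈ V.attach,
          (ψ a * Lp d ↑a z) * (ψ b * Lp d ↑b z) := by
        refine Finset.sum_congr rfl fun z _ => ?_
        rw [discLap_ext, sq, Finset.sum_mul_sum]
    _ = ∑ a ∈ V.attach, ∑ b ∈ V.attach, ψ a * ψ b * ∑ z ∈ SV d V, Lp d ↑a z * Lp d ↑b z := by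
        rw [Finset.sum_comm]
        refine Finset.sum_congr rfl fun a _ => ?_
        rw [Finset.sum_comm]
        refine Finset.sum_congr rfl fun b _ => ?_
        rw [Finset.mul_sum]
        exact Finset.sum_congr rfl fun z _ => by ring
    _ = ∑ a ∈ V.attach, ∑ b ∈ V.attach, ψ a * ψ b * Qm d ↑a ↑b := by
        refine Finset.sum_congr rfl fun a _ => Finset.sum_congr rfl fun b _ => ?_
        rw [Qm_eq_sum d (nbhd_subset_SV d a.2)]
    _ = ψ ⬝ᵥ ((MV d V) *ᵥ ψ) := by
        simp only [dotProduct, Matrix.mulVec, MV, Matrix.of_apply,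
          Finset.univ_eq_attach]
        refine Finset.sum_congr rfl fun a _ => ?_
        rw [Finset.mul_sum]
        exact Finset.sum_congr rfl fun b _ => by ring

/-- The "square root" rectangular matrix. -/
def AV (V : Finset (Zd d)) : Matrix ↥(SV d V) ↥V ℝ := Matrix.of fun z v => Lp d ↑v ↑z

lemma AV_transpose_mul (V : Finset (Zd d)) : (AV d V)ᵀ * AV d V = MV d V := by
  ext a b
  simp only [Matrix.mul_apply, Matrix.transpose_apply, AV, MV, Matrix.of_apply,
    Finset.univ_eq_attach]
  rw [Qm_eq_sum d (nbhd_subset_SV d a.2),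
    ← Finset.sum_attach (SV d V) (fun z => Lp d ↑a z * Lp d ↑b z)]

lemma liouville (hd : 1 ≤ d) (f : Zd d → ℝ) (hf : (Function.support f).Finite)
    (hlap : ∀ x, discLap d f x = 0) : ∀ x, f x = 0 := by
  classical
  -- generic finiteness helpers
  have fin_of : ∀ g : Zd d → ℝ, (∀ x, f x = 0 → g x = 0) → (Function.support g).Finite := by
    intro g hg
    refine hf.subset fun x hx => ?_
    rw [Function.mem_support] at hx ⊢
    exact fun hfx => hx (hg x hfx)
  have fin_shift : ∀ (u : Zd d) (g : Zd d → ℝ), (∀ x, f (x + u) = 0 → g x = 0) →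
      (Function.support g).Finite := by
    intro u g hg
    have hpre : ((fun x : Zd d => x + u) ⁻¹' (Function.support f)).Finite := by
      refine hf.preimage ?_
      intro a _ b _ hab
      simpa using congrArg (fun z => z - u) hab
    refine hpre.subset fun x hx => ?_
    rw [Function.mem_support] at hx
    simp only [Set.mem_preimage, Function.mem_support]
    exact fun hfx => hx (hg x hfx)
  -- translation invariance of finsum
  have shift_inv : ∀ (u : Zd d) (g : Zd d → ℝ), (∑ᶠ x, g (x + u)) = ∑ᶠ x, g x := by
    intro u g
    exact finsum_comp_equiv (Equiv.addRight u)
  -- gradient terms vanish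
  have grad0 : ∀ (i : Fin d) (x : Zd d), f (x + unitv d i) = f x := by
    have hC : ∀ u : Zd d, (∑ᶠ x, f (x + u) * f (x + u)) = ∑ᶠ x, f x * f x := fun u =>
      shift_inv u (fun x => f x * f x)
    have hB : ∀ u : Zd d, (∑ᶠ x, f x * f (x - u)) = ∑ᶠ x, f x * f (x + u) := by
      intro u
      have h1 : (∑ᶠ x, f (x + u) * f (x + u - u)) = ∑ᶠ x, f x * f (x - u) :=
        shift_inv u (fun x => f x * f (x - u))
      have h2 : (∑ᶠ x, f (x + u) * f (x + u - u)) = ∑ᶠ x, f (x + u) * f x := by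
        refine finsum_congr fun x => ?_
        rw [add_sub_cancel_right]
      rw [← h1, h2]
      exact finsum_congr fun x => mul_comm _ _
    -- per-direction identities
    have hS : ∀ i : Fin d,
        (∑ᶠ x, f x * (f (x + unitv d i) - 2 * f x + f (x - unitv d i)))
          = 2 * (∑ᶠ x, f x * f (x + unitv d i)) - 2 * (∑ᶠ x, f x * f x) := by
      intro i
      set u := unitv d i with hu
      have fin1 : (Function.support fun x => f x * f (x + u)).Finite :=
        fin_of _ fun x hx => by rw [hx, zero_mul]
      have fin2 : (Function.support fun x => f x * f (x - u) - 2 * (f x * f x)).Finite :=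
        fin_of _ fun x hx => by rw [hx]; ring
      have fin3 : (Function.support fun x => f x * f (x - u)).Finite :=
        fin_of _ fun x hx => by rw [hx, zero_mul]
      have fin4 : (Function.support fun x => 2 * (f x * f x)).Finite :=
        fin_of _ fun x hx => by rw [hx]; ring
      calc (∑ᶠ x, f x * (f (x + u) - 2 * f x + f (x - u)))
          = ∑ᶠ x, (f x * f (x + u) + (f x * f (x - u) - 2 * (f x * f x))) :=
            finsum_congr fun x => by ring
        _ = (∑ᶠ x, f x * f (x + u)) + ∑ᶠ x, (f x * f (x - u) - 2 * (f x * f x)) :=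
            finsum_add_distrib fin1 fin2
        _ = (∑ᶠ x, f x * f (x + u)) + ((∑ᶠ x, f x * f (x - u)) - ∑ᶠ x, 2 * (f x * f x)) := by
            rw [finsum_sub_distrib fin3 fin4]
        _ = (∑ᶠ x, f x * f (x + u)) + ((∑ᶠ x, f x * f (x + u)) - 2 * ∑ᶠ x, f x * f x) := by
            rw [hB u, ← mul_finsum (fun x => f x * f x) 2]
        _ = 2 * (∑ᶠ x, f x * f (x + u)) - 2 * (∑ᶠ x, f x * f x) := by ring
    have hG : ∀ i : Fin d,
        (∑ᶠ x, (f (x + unitv d i) - f x)^2)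
          = 2 * (∑ᶠ x, f x * f x) - 2 * (∑ᶠ x, f x * f (x + unitv d i)) := by
      intro i
      set u := unitv d i with hu
      have fin1 : (Function.support fun x =>
          f (x + u) * f (x + u) - 2 * (f x * f (x + u))).Finite :=
        fin_shift u _ fun x hx => by rw [hx]; ring
      have fin2 : (Function.support fun x => f x * f x).Finite :=
        fin_of _ fun x hx => by rw [hx, zero_mul]
      have fin3 : (Function.support fun x => f (x + u) * f (x + u)).Finite :=
        fin_shift u _ fun x hx => by rw [hx, zero_mul]
      have fin4 : (Function.support fun x => 2 * (f x * f (x + u))).Finite :=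
        fin_of _ fun x hx => by rw [hx]; ring
      calc (∑ᶠ x, (f (x + u) - f x)^2)
          = ∑ᶠ x, ((f (x + u) * f (x + u) - 2 * (f x * f (x + u))) + f x * f x) :=
            finsum_congr fun x => by ring
        _ = (∑ᶠ x, (f (x + u) * f (x + u) - 2 * (f x * f (x + u)))) + ∑ᶠ x, f x * f x :=
            finsum_add_distrib fin1 fin2
        _ = ((∑ᶠ x, f (x + u) * f (x + u)) - ∑ᶠ x, 2 * (f x * f (x + u)))
              + ∑ᶠ x, f x * f x := by rw [finsum_sub_distrib fin3 fin4]
        _ = ((∑ᶠ x, f x * f x) - 2 * ∑ᶠ x, f x * f (x + u)) + ∑ᶠ x, f x * f x := by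
            rw [hC u, ← mul_finsum (fun x => f x * f (x + u)) 2]
        _ = 2 * (∑ᶠ x, f x * f x) - 2 * (∑ᶠ x, f x * f (x + u)) := by ring
    -- total sum is zero
    have htot : (∑ i : Fin d, ∑ᶠ x, f x * (f (x + unitv d i) - 2 * f x
        + f (x - unitv d i))) = 0 := by
      have h0 : (∑ᶠ x, f x * discLap d f x) = 0 := by
        rw [finsum_congr fun x => by rw [hlap x, mul_zero]]
        exact finsum_zero
      set T := hf.toFinset with hT
      have hmem : ∀ (g : Zd d → ℝ), (∀ x, f x = 0 → g x = 0) →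
          Function.support g ⊆ ↑T := by
        intro g hg x hx
        rw [Function.mem_support] at hx
        rw [hT, Set.Finite.coe_toFinset, Function.mem_support]
        exact fun hfx => hx (hg x hfx)
      have h1 : (∑ᶠ x, f x * discLap d f x)
          = ∑ x ∈ T, f x * discLap d f x :=
        finsum_eq_sum_of_support_subset _ (hmem _ fun x hx => by rw [hx, zero_mul])
      have h2 : ∀ i : Fin d, (∑ᶠ x, f x * (f (x + unitv d i) - 2 * f x + f (x - unitv d i)))
          = ∑ x ∈ T, f x * (f (x + unitv d i) - 2 * f x + f (x - unitv d i)) := fun i =>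
        finsum_eq_sum_of_support_subset _ (hmem _ fun x hx => by rw [hx, zero_mul])
      calc (∑ i : Fin d, ∑ᶠ x, f x * (f (x + unitv d i) - 2 * f x + f (x - unitv d i)))
          = ∑ i : Fin d, ∑ x ∈ T, f x * (f (x + unitv d i) - 2 * f x + f (x - unitv d i)) :=
            Finset.sum_congr rfl fun i _ => h2 i
        _ = ∑ x ∈ T, ∑ i : Fin d, f x * (f (x + unitv d i) - 2 * f x + f (x - unitv d i)) :=
            Finset.sum_comm
        _ = ∑ x ∈ T, f x * discLap d f x := by
            refine Finset.sum_congr rfl fun x _ => ?_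
            rw [discLap, Finset.mul_sum]
        _ = 0 := by rw [← h1, h0]
    have hGsum : (∑ i : Fin d, ∑ᶠ x, (f (x + unitv d i) - f x)^2) = 0 := by
      have : (∑ i : Fin d, ∑ᶠ x, (f (x + unitv d i) - f x)^2)
          = -(∑ i : Fin d, ∑ᶠ x, f x * (f (x + unitv d i) - 2 * f x + f (x - unitv d i))) := by
        rw [← Finset.sum_neg_distrib]
        refine Finset.sum_congr rfl fun i _ => ?_
        rw [hG i, hS i]; ring
      rw [this, htot, neg_zero]
    have hGzero : ∀ i : Fin d, (∑ᶠ x, (f (x + unitv d i) - f x)^2) = 0 := by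
      intro i
      refine (Finset.sum_eq_zero_iff_of_nonneg fun j _ => finsum_nonneg
        fun x => sq_nonneg _).1 hGsum i (Finset.mem_univ i)
    intro i x
    have finsq : (Function.support fun x => (f (x + unitv d i) - f x)^2).Finite := by
      refine ((fin_shift (unitv d i) (fun x => f (x + unitv d i))
        fun x hx => hx).union hf).subset fun y hy => ?_
      rw [Function.mem_support] at hy
      simp only [Set.mem_union, Function.mem_support, ne_eq]
      by_contra hc
      push_neg at hc
      exact hy (by rw [hc.1, hc.2]; ring)
    have hsum0 : (∑ x ∈ finsq.toFinset, (f (x + unitv d i) - f x)^2) = 0 := by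
      rw [← finsum_eq_sum_of_support_subset _ (by rw [Set.Finite.coe_toFinset])]
      exact hGzero i
    have hptwise : (f (x + unitv d i) - f x)^2 = 0 := by
      by_cases hmem : x ∈ finsq.toFinset
      · exact (Finset.sum_eq_zero_iff_of_nonneg fun y _ => sq_nonneg _).1 hsum0 x hmem
      · rw [Set.Finite.mem_toFinset] at hmem
        exact Function.notMem_support.1 hmem
    have := pow_eq_zero_iff (n := 2) (by norm_num) |>.1 hptwise
    linarith [this]
  -- conclusion via injectivity
  intro x
  by_contra hx
  have hu1 : unitv d ⟨0, hd⟩ ⟨0, hd⟩ = 1 := by simp [unitv]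
  have hconst : ∀ n : ℕ, f (x + n • unitv d ⟨0, hd⟩) = f x := by
    intro n
    induction n with
    | zero => simp
    | succ n ih =>
      rw [succ_nsmul, ← add_assoc, grad0 ⟨0, hd⟩]
      exact ih
  have hinj : Function.Injective fun n : ℕ => x + n • unitv d ⟨0, hd⟩ := by
    intro m n hmn
    have h1 : (m • unitv d ⟨0, hd⟩ : Zd d) = n • unitv d ⟨0, hd⟩ := by
      have := hmn
      simpa using add_left_cancel this
    have h2 := congrFun h1 ⟨0, hd⟩
    simp only [Pi.smul_apply, hu1] at h2
    have h3 : (m : ℤ) = (n : ℤ) := by simpa using h2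
    exact_mod_cast h3
  have hinf : (Function.support f).Infinite :=
    Set.infinite_of_injective_forall_mem hinj fun n => by
      rw [Function.mem_support, hconst n]
      exact hx
  exact hinf hf

lemma AV_mulVec_injective (hd : 1 ≤ d) (V : Finset (Zd d)) (x : ↥V → ℝ)
    (hAx : (AV d V) *ᵥ x = 0) : x = 0 := by
  have hext : ∀ z, discLap d (extZero d V x) z = 0 := by
    intro z
    by_cases hz : z ∈ SV d V
    · have h0 := congrFun hAx ⟨z, hz⟩
      simp only [Matrix.mulVec, dotProduct, AV, Matrix.of_apply,
        Finset.univ_eq_attach, Pi.zero_apply] at h0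
      rw [discLap_ext]
      rw [show (∑ v ∈ V.attach, x v * Lp d ↑v z)
          = ∑ v ∈ V.attach, Lp d ↑v z * x v from
        Finset.sum_congr rfl fun v _ => mul_comm _ _]
      exact h0
    · exact discLap_ext_eq_zero d V x hz
  have hsupp : (Function.support (extZero d V x)).Finite := by
    refine Set.Finite.subset V.finite_toSet fun z hz => ?_
    rw [Function.mem_support] at hz
    by_contra h
    rw [Finset.mem_coe] at h
    exact hz (by simp [extZero, h])
  have hzero := liouville d hd _ hsupp hext
  funext v
  have := hzero ↑v
  simpa [extZero, dif_pos v.2] using this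

lemma MV_posDef (hd : 1 ≤ d) (V : Finset (Zd d)) : (MV d V).PosDef := by
  refine Matrix.PosDef.of_dotProduct_mulVec_pos ?_ ?_
  · show (MV d V)ᴴ = MV d V
    ext a b
    simp [Matrix.conjTranspose_apply, MV, Qm_symm d]
  · intro x hx
    have hstar : star x = x := by
      funext v; exact star_trivial _
    have key : star x ⬝ᵥ ((MV d V) *ᵥ x) = ((AV d V) *ᵥ x) ⬝ᵥ ((AV d V) *ᵥ x) := by
      rw [hstar, ← AV_transpose_mul, ← Matrix.mulVec_mulVec, Matrix.dotProduct_mulVec,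
        Matrix.vecMul_transpose]
    rw [key]
    have hAx : (AV d V) *ᵥ x ≠ 0 := fun h => hx (AV_mulVec_injective d hd V x h)
    obtain ⟨z, hz⟩ := Function.ne_iff.1 hAx
    refine Finset.sum_pos' (fun w _ => mul_self_nonneg _) ⟨z, Finset.mem_univ z, ?_⟩
    exact mul_self_pos.2 (by simpa using hz)

lemma integral_gaussian_std (ι : Type) [Fintype ι] :
    ∫ y : ι → ℝ, Real.exp (-((1:ℝ)/2 * ∑ i, (y i)^2))
      = (Real.sqrt (2*Real.pi)) ^ (Fintype.card ι) := by
  have hexp : ∀ y : ι → ℝ, Real.exp (-((1:ℝ)/2 * ∑ i, (y i)^2))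
      = ∏ i, Real.exp (-((1:ℝ)/2 * (y i)^2)) := by
    intro y
    rw [← Real.exp_sum]
    congr 1
    rw [Finset.mul_sum, ← Finset.sum_neg_distrib]
  simp_rw [hexp]
  rw [MeasureTheory.integral_fintype_prod_volume_eq_pow (fun t : ℝ => Real.exp (-((1:ℝ)/2 * t^2)))]
  congr 1
  have h2 : ∀ t : ℝ, -((1:ℝ)/2 * t^2) = -(1/2 : ℝ) * t^2 := fun t => by ring
  simp_rw [h2]
  rw [integral_gaussian ((1:ℝ)/2)]
  congr 1
  rw [div_div_eq_mul_div, mul_comm]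
  norm_num

open scoped MatrixOrder in
lemma integral_gaussian_matrix {ι : Type} [Fintype ι] [DecidableEq ι] {M : Matrix ι ι ℝ}
    (hM : M.PosDef) :
    ∫ x : ι → ℝ, Real.exp (-((1:ℝ)/2 * (x ⬝ᵥ (M *ᵥ x)))) =
      (Real.sqrt (2*Real.pi)) ^ (Fintype.card ι) / Real.sqrt M.det := by
  have hBB : CFC.sqrt M * CFC.sqrt M = M := CFC.sqrt_mul_sqrt_self M hM.posSemidef.nonneg
  set B := CFC.sqrt M with hBdef
  have hBsym : Bᵀ = B := by
    have h := (Matrix.nonneg_iff_posSemidef.1 (CFC.sqrt_nonneg M)).isHermitian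
    ext i j
    have h2 := congrFun (congrFun h i) j
    simpa [Matrix.conjTranspose_apply] using h2
  have hdetM : 0 < M.det := hM.det_pos
  have hdet2 : B.det * B.det = M.det := by rw [← Matrix.det_mul, hBB]
  have hdetB : B.det ≠ 0 := by
    intro h
    rw [h, zero_mul] at hdet2
    exact hdetM.ne' hdet2.symm
  have habs : |B.det| = Real.sqrt M.det := by
    rw [← hdet2, ← sq B.det, Real.sqrt_sq_eq_abs]
  have quad : ∀ x : ι → ℝ, x ⬝ᵥ (M *ᵥ x) = ∑ i, ((B *ᵥ x) i)^2 := by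
    intro x
    rw [← hBB, ← Matrix.mulVec_mulVec, Matrix.dotProduct_mulVec]
    nth_rewrite 1 [← hBsym]
    rw [Matrix.vecMul_transpose]
    simp only [dotProduct, pow_two]
  have hmap := Real.map_matrix_volume_pi_eq_smul_volume_pi (M := B) hdetB
  have hcont : Continuous fun y : ι → ℝ => Real.exp (-((1:ℝ)/2 * ∑ i, (y i)^2)) := by
    fun_prop
  have hlin : Measurable (Matrix.toLin' B) :=
    (Matrix.toLin' B).continuous_of_finiteDimensional.measurable
  calc ∫ x : ι → ℝ, Real.exp (-((1:ℝ)/2 * (x ⬝ᵥ (M *ᵥ x))))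
      = ∫ x : ι → ℝ, Real.exp (-((1:ℝ)/2 * ∑ i, ((Matrix.toLin' B) x i)^2)) := by
        refine integral_congr_ae (Filter.Eventually.of_forall fun x => ?_)
        dsimp only
        rw [quad]
        simp [Matrix.toLin'_apply]
    _ = ∫ y, Real.exp (-((1:ℝ)/2 * ∑ i, (y i)^2))
          ∂(Measure.map (Matrix.toLin' B) volume) :=
        (integral_map hlin.aemeasurable hcont.aestronglyMeasurable).symm
    _ = (ENNReal.ofReal |B.det⁻¹|).toReal
          * ∫ y : ι → ℝ, Real.exp (-((1:ℝ)/2 * ∑ i, (y i)^2)) := by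
        rw [hmap, integral_smul_measure, smul_eq_mul]
    _ = (Real.sqrt (2*Real.pi)) ^ (Fintype.card ι) / Real.sqrt M.det := by
        rw [integral_gaussian_std, abs_inv, ENNReal.toReal_ofReal (by positivity), habs,
          inv_mul_eq_div]

lemma Zpart_eq (hd : 1 ≤ d) (V : Finset (Zd d)) :
    Zpart d V = (Real.sqrt (2*Real.pi)) ^ V.card / Real.sqrt (MV d V).det := by
  unfold Zpart
  have h : ∀ ψ : ↥V → ℝ, -(hamiltonian d V ψ)
      = -((1:ℝ)/2 * (ψ ⬝ᵥ ((MV d V) *ᵥ ψ))) := fun ψ => by rw [hamiltonian_quad]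
  simp_rw [h]
  rw [integral_gaussian_matrix (MV_posDef d hd V), Fintype.card_coe]

/-- determinant of the Gram matrix. -/
def DQ (V : Finset (Zd d)) : ℝ := (MV d V).det

lemma DQ_pos (hd : 1 ≤ d) (V : Finset (Zd d)) : 0 < DQ d V := (MV_posDef d hd V).det_pos

/-- `b`-vector. -/
def bv (S : Finset (Zd d)) (y : Zd d) : ↥S → ℝ := fun s => Qm d ↑s y

lemma det_insert (hd : 1 ≤ d) {S : Finset (Zd d)} {y : Zd d} (hy : y ∉ S) :
    DQ d (insert y S) = DQ d S * (Qm d y y - bv d S y ⬝ᵥ ((MV d S)⁻¹ *ᵥ bv d S y)) := by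
  classical
  have hyT : y ∈ insert y S := Finset.mem_insert_self y S
  let e : (↥S ⊕ Unit) ≃ ↥(insert y S) :=
    { toFun := Sum.elim (fun s => ⟨↑s, Finset.mem_insert_of_mem s.2⟩) (fun _ => ⟨y, hyT⟩)
      invFun := fun t => if h : ↑t ∈ S then Sum.inl ⟨↑t, h⟩ else Sum.inr ()
      left_inv := by
        rintro (s | ⟨⟩)
        · simp only [Sum.elim_inl]
          exact dif_pos s.2
        · simp only [Sum.elim_inr]
          exact dif_neg hy
      right_inv := fun t => by
        by_cases h : ↑t ∈ S
        · simp only [dif_pos h, Sum.elim_inl]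
        · simp only [dif_neg h, Sum.elim_inr]
          exact Subtype.ext (by
            rcases Finset.mem_insert.1 t.2 with h' | h'
            · exact h'.symm
            · exact absurd h' h) }
  have hblock : (MV d (insert y S)).submatrix e e =
      Matrix.fromBlocks (MV d S) (Matrix.of fun (s : ↥S) (_ : Unit) => Qm d ↑s y)
        (Matrix.of fun (_ : Unit) (s : ↥S) => Qm d y ↑s) (Matrix.of fun _ _ => Qm d y y) := by
    ext a b
    rcases a with a | a <;> rcases b with b | b <;> rfl
  haveI : Invertible (MV d S) :=
    Matrix.invertibleOfIsUnitDet _ (isUnit_iff_ne_zero.2 (MV_posDef d hd S).det_pos.ne')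
  have hdet := Matrix.det_submatrix_equiv_self e (MV d (insert y S))
  rw [DQ, ← hdet, hblock, Matrix.det_fromBlocks₁₁]
  congr 1
  rw [Matrix.invOf_eq_nonsing_inv, Matrix.det_unique]
  simp only [Matrix.sub_apply, Matrix.of_apply]
  congr 1
  calc (Matrix.of (fun (_ : Unit) (s : ↥S) => Qm d y ↑s) * (MV d S)⁻¹
        * Matrix.of (fun (s : ↥S) (_ : Unit) => Qm d ↑s y)) default default
      = ∑ s : ↥S, (∑ t : ↥S, Qm d y ↑t * (MV d S)⁻¹ t s) * Qm d ↑s y := by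
        rw [Matrix.mul_apply]
        refine Finset.sum_congr rfl fun s _ => ?_
        rw [Matrix.mul_apply]
        rfl
    _ = ∑ t : ↥S, ∑ s : ↥S, Qm d y ↑t * (MV d S)⁻¹ t s * Qm d ↑s y := by
        rw [← Finset.sum_comm]
        refine Finset.sum_congr rfl fun s _ => ?_
        rw [Finset.sum_mul]
    _ = ∑ t : ↥S, bv d S y t * ∑ s : ↥S, (MV d S)⁻¹ t s * bv d S y s := by
        refine Finset.sum_congr rfl fun t _ => ?_
        rw [Finset.mul_sum]
        refine Finset.sum_congr rfl fun s _ => ?_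
        simp only [bv]
        rw [Qm_symm d y ↑t]
        ring
    _ = bv d S y ⬝ᵥ ((MV d S)⁻¹ *ᵥ bv d S y) := rfl

lemma mulVec_inv_cancel {ι : Type} [Fintype ι] [DecidableEq ι] {N : Matrix ι ι ℝ}
    (hN : N.PosDef) (x : ι → ℝ) : N *ᵥ (N⁻¹ *ᵥ x) = x := by
  rw [Matrix.mulVec_mulVec,
    Matrix.mul_nonsing_inv _ (isUnit_iff_ne_zero.2 hN.det_pos.ne'), Matrix.one_mulVec]

lemma var_upper {ι : Type} [Fintype ι] [DecidableEq ι] {N : Matrix ι ι ℝ}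
    (hN : N.PosDef) (w x : ι → ℝ) :
    2 * (w ⬝ᵥ x) - w ⬝ᵥ (N *ᵥ w) ≤ x ⬝ᵥ (N⁻¹ *ᵥ x) := by
  have hNsym : Nᵀ = N := by
    ext i j
    have h2 := congrFun (congrFun hN.isHermitian i) j
    simpa [Matrix.conjTranspose_apply] using h2
  have hcan : N *ᵥ (N⁻¹ *ᵥ x) = x := mulVec_inv_cancel hN x
  set z := w - N⁻¹ *ᵥ x with hz
  have h0 : 0 ≤ z ⬝ᵥ (N *ᵥ z) := by
    have h := hN.posSemidef.dotProduct_mulVec_nonneg z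
    have hstar : star z = z := by funext v; exact star_trivial _
    rwa [hstar] at h
  have e1 : (N⁻¹ *ᵥ x) ⬝ᵥ (N *ᵥ w) = x ⬝ᵥ w := by
    rw [Matrix.dotProduct_mulVec]
    congr 1
    nth_rewrite 2 [← hNsym]
    rw [Matrix.vecMul_transpose, hcan]
  have e2 : (N⁻¹ *ᵥ x) ⬝ᵥ x = x ⬝ᵥ (N⁻¹ *ᵥ x) := dotProduct_comm _ _
  have e3 : x ⬝ᵥ w = w ⬝ᵥ x := dotProduct_comm _ _
  have hexp : z ⬝ᵥ (N *ᵥ z) = w ⬝ᵥ (N *ᵥ w) - 2*(w ⬝ᵥ x) + x ⬝ᵥ (N⁻¹ *ᵥ x) := by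
    have hNz : N *ᵥ z = N *ᵥ w - x := by rw [hz, Matrix.mulVec_sub, hcan]
    rw [hNz, dotProduct_sub, hz, sub_dotProduct, sub_dotProduct,
      e1, e2, e3]
    ring
  linarith

lemma var_attain' {ι : Type} [Fintype ι] [DecidableEq ι] {N : Matrix ι ι ℝ}
    (hN : N.PosDef) (x : ι → ℝ) :
    x ⬝ᵥ (N⁻¹ *ᵥ x)
      = 2 * ((N⁻¹ *ᵥ x) ⬝ᵥ x) - (N⁻¹ *ᵥ x) ⬝ᵥ (N *ᵥ (N⁻¹ *ᵥ x)) := by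
  rw [mulVec_inv_cancel hN x, dotProduct_comm x (N⁻¹ *ᵥ x)]
  ring

/-- extension of a vector by zero. -/
def extV {S S' : Finset (Zd d)} (w : ↥S → ℝ) : ↥S' → ℝ :=
  fun t => if h : ↑t ∈ S then w ⟨↑t, h⟩ else 0

lemma sum_extV_mul {S S' : Finset (Zd d)} (hSS : S ⊆ S') (w : ↥S → ℝ) (F : Zd d → ℝ) :
    ∑ t : ↥S', (extV d w t * F ↑t) = ∑ s : ↥S, w s * F ↑s := by
  classical
  have h1 : ∑ t : ↥S', (extV d w t * F ↑t)
      = ∑ z ∈ S', (if h : z ∈ S then w ⟨z, h⟩ else 0) * F z := by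
    rw [← Finset.sum_coe_sort S' (fun z => (if h : z ∈ S then w ⟨z, h⟩ else 0) * F z)]
    rfl
  have h2 : ∑ s : ↥S, w s * F ↑s
      = ∑ z ∈ S, (if h : z ∈ S then w ⟨z, h⟩ else 0) * F z := by
    rw [← Finset.sum_coe_sort S (fun z => (if h : z ∈ S then w ⟨z, h⟩ else 0) * F z)]
    refine Finset.sum_congr rfl fun s _ => ?_
    rw [dif_pos s.2]
  rw [h1, h2]
  refine (Finset.sum_subset hSS fun z _ hzS => ?_).symm
  rw [dif_neg hzS, zero_mul]

lemma quad_extV {S S' : Finset (Zd d)} (hSS : S ⊆ S') (w : ↥S → ℝ) :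
    (extV d w : ↥S' → ℝ) ⬝ᵥ ((MV d S') *ᵥ (extV d w)) = w ⬝ᵥ ((MV d S) *ᵥ w) := by
  have inner : ∀ z : Zd d, (∑ r : ↥S', Qm d z ↑r * extV d w r)
      = ∑ r : ↥S, Qm d z ↑r * w r := by
    intro z
    calc ∑ r : ↥S', Qm d z ↑r * extV d w r
        = ∑ r : ↥S', extV d w r * Qm d z ↑r :=
          Finset.sum_congr rfl fun r _ => mul_comm _ _
      _ = ∑ s : ↥S, w s * Qm d z ↑s := sum_extV_mul d hSS w (fun xx => Qm d z xx)
      _ = ∑ r : ↥S, Qm d z ↑r * w r := Finset.sum_congr rfl fun r _ => mul_comm _ _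
  calc (extV d w : ↥S' → ℝ) ⬝ᵥ ((MV d S') *ᵥ (extV d w))
      = ∑ t : ↥S', extV d w t * (∑ r : ↥S, Qm d ↑t ↑r * w r) := by
        simp only [dotProduct, Matrix.mulVec, MV, Matrix.of_apply]
        exact Finset.sum_congr rfl fun t _ => by rw [inner ↑t]
    _ = ∑ s : ↥S, w s * (∑ r : ↥S, Qm d ↑s ↑r * w r) :=
        sum_extV_mul d hSS w (fun xx => ∑ r : ↥S, Qm d xx ↑r * w r)
    _ = w ⬝ᵥ ((MV d S) *ᵥ w) := by
        simp only [dotProduct, Matrix.mulVec, MV, Matrix.of_apply]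

lemma key (hd : 1 ≤ d) {S S' : Finset (Zd d)} (hSS : S ⊆ S') {y : Zd d} (hy : y ∉ S') :
    DQ d (insert y S') * DQ d S ≤ DQ d (insert y S) * DQ d S' := by
  have hyS : y ∉ S := fun h => hy (hSS h)
  rw [det_insert d hd hy, det_insert d hd hyS]
  have hq : bv d S y ⬝ᵥ ((MV d S)⁻¹ *ᵥ bv d S y)
      ≤ bv d S' y ⬝ᵥ ((MV d S')⁻¹ *ᵥ bv d S' y) := by
    set w0 := (MV d S)⁻¹ *ᵥ bv d S y with hw0
    have h1 := var_attain' (MV_posDef d hd S) (bv d S y)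
    have h2 : w0 ⬝ᵥ bv d S y = (extV d w0 : ↥S' → ℝ) ⬝ᵥ bv d S' y := by
      have h := sum_extV_mul d hSS w0 (fun xx => Qm d xx y)
      simp only [dotProduct, bv]
      exact h.symm
    have h3 := quad_extV d hSS w0
    calc bv d S y ⬝ᵥ ((MV d S)⁻¹ *ᵥ bv d S y)
        = 2 * (w0 ⬝ᵥ bv d S y) - w0 ⬝ᵥ ((MV d S) *ᵥ w0) := h1
      _ = 2 * ((extV d w0 : ↥S' → ℝ) ⬝ᵥ bv d S' y)
            - (extV d w0 : ↥S' → ℝ) ⬝ᵥ ((MV d S') *ᵥ extV d w0) := by rw [h2, h3]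
      _ ≤ bv d S' y ⬝ᵥ ((MV d S')⁻¹ *ᵥ bv d S' y) := var_upper (MV_posDef d hd S') _ _
  have p1 : 0 < DQ d S := DQ_pos d hd S
  have p2 : 0 < DQ d S' := DQ_pos d hd S'
  nlinarith [mul_pos p1 p2]

lemma DQ_submodular (hd : 1 ≤ d) (V W : Finset (Zd d)) :
    DQ d (V ∪ W) * DQ d (V ∩ W) ≤ DQ d V * DQ d W := by
  classical
  generalize hn : (W \ V).card = n
  induction n generalizing W with
  | zero =>
    have hWV : W ⊆ V := by
      rw [← Finset.sdiff_eq_empty_iff_subset]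
      exact Finset.card_eq_zero.1 hn
    rw [Finset.union_eq_left.2 hWV, Finset.inter_eq_right.2 hWV]
  | succ n ih =>
    obtain ⟨y, hy⟩ := Finset.card_pos.1 (by omega : 0 < (W \ V).card)
    have hyW : y ∈ W := (Finset.mem_sdiff.1 hy).1
    have hyV : y ∉ V := (Finset.mem_sdiff.1 hy).2
    set W0 := W.erase y with hW0
    have hins : insert y W0 = W := Finset.insert_erase hyW
    have hcard : (W0 \ V).card = n := by
      rw [hW0, Finset.erase_sdiff_comm, Finset.card_erase_of_mem hy, hn]
      omega
    have hyW0 : y ∉ W0 := Finset.notMem_erase y W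
    have hyVW0 : y ∉ V ∪ W0 := by simp [hyV, hyW0]
    have hW0sub : W0 ⊆ V ∪ W0 := Finset.subset_union_right
    have hkey := key d hd hW0sub hyVW0
    have hih := ih W0 hcard
    have hU : V ∪ W = insert y (V ∪ W0) := by rw [← hins, Finset.union_insert]
    have hI : V ∩ W = V ∩ W0 := by rw [← hins, Finset.inter_insert_of_notMem hyV]
    rw [hU, hI, ← hins]
    have pW0 := DQ_pos d hd W0
    have pU := DQ_pos d hd (V ∪ W0)
    have pI := DQ_pos d hd (V ∩ W0)
    have pV := DQ_pos d hd V
    have pY := DQ_pos d hd (insert y W0)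
    have h1 : DQ d (insert y (V ∪ W0)) * DQ d W0 * DQ d (V ∩ W0)
        ≤ DQ d (insert y W0) * DQ d (V ∪ W0) * DQ d (V ∩ W0) :=
      mul_le_mul_of_nonneg_right hkey pI.le
    have h2 : DQ d (insert y W0) * (DQ d (V ∪ W0) * DQ d (V ∩ W0))
        ≤ DQ d (insert y W0) * (DQ d V * DQ d W0) :=
      mul_le_mul_of_nonneg_left hih pY.le
    have h3 : DQ d (insert y (V ∪ W0)) * DQ d (V ∩ W0) * DQ d W0
        ≤ DQ d V * DQ d (insert y W0) * DQ d W0 := by nlinarith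
    exact le_of_mul_le_mul_right h3 pW0

end FKGaux

/-- FKG lattice condition for the membrane partition functions. -/
theorem Zpart_FKG_lattice (d : ℕ) (hd : 1 ≤ d) (Λ : Finset (Zd d))
    (A A' : Finset (Zd d)) (hA : A ⊆ Λ) (hA' : A' ⊆ Λ) :
    Zpart d (Λ \ A) * Zpart d (Λ \ A')
      ≤ Zpart d (Λ \ (A ∪ A')) * Zpart d (Λ \ (A ∩ A')) := by
  classical
  open FKGaux in
  set V := Λ \ A with hV
  set W := Λ \ A' with hW
  have hI : Λ \ (A ∪ A') = V ∩ W := by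
    ext x
    simp only [hV, hW, Finset.mem_sdiff, Finset.mem_union, Finset.mem_inter]
    tauto
  have hU : Λ \ (A ∩ A') = V ∪ W := by
    ext x
    simp only [hV, hW, Finset.mem_sdiff, Finset.mem_inter, Finset.mem_union]
    tauto
  rw [hI, hU, Zpart_eq d hd V, Zpart_eq d hd W, Zpart_eq d hd (V ∩ W),
    Zpart_eq d hd (V ∪ W)]
  have hcard : (V ∩ W).card + (V ∪ W).card = V.card + W.card := by
    rw [add_comm]
    exact Finset.card_union_add_card_inter V W
  have dV := (MV_posDef d hd V).det_pos
  have dW := (MV_posDef d hd W).det_pos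
  have dI := (MV_posDef d hd (V ∩ W)).det_pos
  have dU := (MV_posDef d hd (V ∪ W)).det_pos
  have hsub : (MV d (V ∩ W)).det * (MV d (V ∪ W)).det
      ≤ (MV d V).det * (MV d W).det := by
    have h := DQ_submodular d hd V W
    simpa [DQ, mul_comm] using h
  rw [div_mul_div_comm, div_mul_div_comm, ← pow_add, ← pow_add, hcard,
    ← Real.sqrt_mul dV.le, ← Real.sqrt_mul dI.le]
  gcongr
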